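/- Let Ω : ℝ → ℝ be a bounded continuous function, A : ℝ → ℝ bounded continuous, m ≥ 1/2, and suppose ψ ∈ L²(ℝ) is a nonzero solution (in the distributional sense, with ψ'' ∈ L²) of -ψ'' + m²ψ + (Ω-μ)^{-1} A ψ = 0 with Im μ > 0. If dist(μ, [inf Ω, sup Ω]) ≥ δ > 0, then m² ≤ δ^{-1} ‖A‖_∞. In particular, every eigenvalue μ ∈ 𝐮_m satisfies |μ| ≤ sup|Ω| + m^{-2}‖A‖_∞. -/

import Mathlib

open MeasureTheory Real Set Filter Topology

lemma convex_integrable_nonneg_eq_zero (u : ℝ → ℝ) (hc : Continuous u)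
    (hnn : ∀ x, 0 ≤ u x) (hconv : ConvexOn ℝ univ u) (hint : Integrable u) :
    ∀ x, u x = 0 := by
  intro x
  set I := ∫ y, u y with hI
  have hI0 : 0 ≤ I := integral_nonneg hnn
  have key : ∀ R : ℝ, 0 < R → R * u x ≤ I := by
    intro R hR
    have hmid : ∀ h : ℝ, u x ≤ (u (x - h) + u (x + h)) / 2 := by
      intro h
      have := hconv.2 (mem_univ (x - h)) (mem_univ (x + h))
        (by norm_num : (0:ℝ) ≤ (1:ℝ)/2) (by norm_num : (0:ℝ) ≤ (1:ℝ)/2) (by norm_num)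
      simp only [smul_eq_mul] at this
      have harg : (1:ℝ)/2 * (x - h) + (1:ℝ)/2 * (x + h) = x := by ring
      rw [harg] at this
      linarith
    have h1 : (∫ h in (0:ℝ)..R, u x) ≤ ∫ h in (0:ℝ)..R, (u (x - h) + u (x + h)) / 2 := by
      apply intervalIntegral.integral_mono_on hR.le
      · exact intervalIntegrable_const
      · exact (((hc.comp (continuous_const.sub continuous_id)).add
          (hc.comp (continuous_const.add continuous_id))).div_const 2).intervalIntegrable _ _
      · intro h _; exact hmid h
    have hconst : (∫ h in (0:ℝ)..R, u x) = R * u x := by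
      simp [intervalIntegral.integral_const, smul_eq_mul]
    have hplus : (∫ h in (0:ℝ)..R, u (x + h)) ≤ I := by
      rw [intervalIntegral.integral_comp_add_left u x, intervalIntegral.integral_of_le (by linarith)]
      exact setIntegral_le_integral hint (Filter.Eventually.of_forall hnn)
    have hminus : (∫ h in (0:ℝ)..R, u (x - h)) ≤ I := by
      rw [intervalIntegral.integral_comp_sub_left u x, intervalIntegral.integral_of_le (by linarith)]
      exact setIntegral_le_integral hint (Filter.Eventually.of_forall hnn)
    have hsplit : (∫ h in (0:ℝ)..R, (u (x - h) + u (x + h)) / 2)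
        = ((∫ h in (0:ℝ)..R, u (x - h)) + (∫ h in (0:ℝ)..R, u (x + h))) / 2 := by
      rw [← intervalIntegral.integral_add, intervalIntegral.integral_div]
      · exact (hc.comp (continuous_const.sub continuous_id)).intervalIntegrable _ _
      · exact (hc.comp (continuous_const.add continuous_id)).intervalIntegrable _ _
    rw [hconst] at h1
    rw [hsplit] at h1
    linarith
  by_contra hne
  have hpos : 0 < u x := lt_of_le_of_ne (hnn x) (Ne.symm hne)
  have := key (2 * (I + 1) / u x) (by positivity)
  rw [div_mul_cancel₀ _ (ne_of_gt hpos)] at this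
  linarith

theorem eigenvalue_bounds (Ω A : ℝ → ℝ) (hΩc : Continuous Ω) (hΩb : ∃ C : ℝ, ∀ t, |Ω t| ≤ C)
    (hAc : Continuous A) (hAb : ∃ C : ℝ, ∀ t, |A t| ≤ C)
    (m : ℝ) (hm : (1 : ℝ) / 2 ≤ m) (μ : ℂ) (hμ : 0 < μ.im)
    (ψ : ℝ → ℂ) (hψ : ContDiff ℝ 2 ψ) (hψ0 : ψ ≠ 0)
    (hL2 : MemLp ψ 2 volume) (hL2'' : MemLp (deriv (deriv ψ)) 2 volume)
    (heq : ∀ t : ℝ, -(deriv (deriv ψ) t) + (m : ℂ) ^ 2 * ψ t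
        + ((A t : ℂ) / ((Ω t : ℂ) - μ)) * ψ t = 0) :
    (∀ δ : ℝ, 0 < δ →
      (∀ x ∈ Icc (⨅ t : ℝ, Ω t) (⨆ t : ℝ, Ω t), δ ≤ ‖(x : ℂ) - μ‖) →
      m ^ 2 ≤ δ⁻¹ * ⨆ t : ℝ, |A t|) ∧
    ‖μ‖ ≤ (⨆ t : ℝ, |Ω t|) + (m ^ 2)⁻¹ * ⨆ t : ℝ, |A t| := by
  obtain ⟨CA, hCA⟩ := hAb
  obtain ⟨CΩ, hCΩ⟩ := hΩb
  have hAbdd : BddAbove (range fun t => |A t|) := ⟨CA, by rintro _ ⟨t, rfl⟩; exact hCA t⟩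
  have hΩbdd : BddAbove (range Ω) := ⟨CΩ, by rintro _ ⟨t, rfl⟩; exact (abs_le.mp (hCΩ t)).2⟩
  have hΩbdd' : BddBelow (range Ω) := ⟨-CΩ, by rintro _ ⟨t, rfl⟩; exact (abs_le.mp (hCΩ t)).1⟩
  have hΩabdd : BddAbove (range fun t => |Ω t|) := ⟨CΩ, by rintro _ ⟨t, rfl⟩; exact hCΩ t⟩
  set K := ⨆ t, |A t| with hK
  have hKle : ∀ t, |A t| ≤ K := fun t => le_ciSup hAbdd t
  have hK0 : 0 ≤ K := le_trans (abs_nonneg _) (hKle 0)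
  have hm0 : 0 < m := lt_of_lt_of_le (by norm_num) hm
  have part1 : ∀ δ : ℝ, 0 < δ →
      (∀ x ∈ Icc (⨅ t : ℝ, Ω t) (⨆ t : ℝ, Ω t), δ ≤ ‖(x : ℂ) - μ‖) →
      m ^ 2 ≤ δ⁻¹ * K := by
    intro δ hδ hdist
    by_contra hcon
    push_neg at hcon
    -- differentiability setup
    have hψd : Differentiable ℝ ψ := hψ.differentiable (by norm_num)
    have hψ'cd : ContDiff ℝ 1 (deriv ψ) := by
      have h2 : ContDiff ℝ ((1 : WithTop ℕ∞) + 1) ψ := by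
        rw [one_add_one_eq_two]; exact_mod_cast hψ
      exact (contDiff_succ_iff_deriv.mp h2).2.2
    have hψ'd : Differentiable ℝ (deriv ψ) := hψ'cd.differentiable one_ne_zero
    have hre : ∀ (f : ℝ → ℂ) (t : ℝ) (d : ℂ), HasDerivAt f d t →
        HasDerivAt (fun s => (f s).re) d.re t := fun f t d h =>
      (Complex.reCLM.hasFDerivAt.comp_hasDerivAt t h)
    have him : ∀ (f : ℝ → ℂ) (t : ℝ) (d : ℂ), HasDerivAt f d t →
        HasDerivAt (fun s => (f s).im) d.im t := fun f t d h =>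
      (Complex.imCLM.hasFDerivAt.comp_hasDerivAt t h)
    set u : ℝ → ℝ := fun t => Complex.normSq (ψ t) with hu
    set v : ℝ → ℝ := fun t => 2 * ((ψ t).re * (deriv ψ t).re + (ψ t).im * (deriv ψ t).im) with hv
    have hueq : u = fun s => (ψ s).re * (ψ s).re + (ψ s).im * (ψ s).im :=
      funext fun s => by simp [hu, Complex.normSq_apply]
    have hud : ∀ t, HasDerivAt u (v t) t := by
      intro t
      have h1 : HasDerivAt ψ (deriv ψ t) t := (hψd t).hasDerivAt
      have hfre := hre ψ t _ h1
      have hfim := him ψ t _ h1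
      have h2 : HasDerivAt u ((deriv ψ t).re * (ψ t).re + (ψ t).re * (deriv ψ t).re
          + ((deriv ψ t).im * (ψ t).im + (ψ t).im * (deriv ψ t).im)) t := by
        rw [hueq]; exact (hfre.mul hfre).add (hfim.mul hfim)
      convert h2 using 1
      simp only [hv]; ring
    have hderivu : deriv u = v := funext fun t => (hud t).deriv
    have hvd : ∀ t, HasDerivAt v (2 * ((deriv ψ t).re ^ 2 + (deriv ψ t).im ^ 2)
        + 2 * ((ψ t).re * (deriv (deriv ψ) t).re + (ψ t).im * (deriv (deriv ψ) t).im)) t := by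
      intro t
      have h1 : HasDerivAt ψ (deriv ψ t) t := (hψd t).hasDerivAt
      have h2 : HasDerivAt (deriv ψ) (deriv (deriv ψ) t) t := (hψ'd t).hasDerivAt
      have hfre := hre ψ t _ h1
      have hfim := him ψ t _ h1
      have hgre := hre (deriv ψ) t _ h2
      have hgim := him (deriv ψ) t _ h2
      have h3 : HasDerivAt v (2 * (((deriv ψ t).re * (deriv ψ t).re
          + (ψ t).re * (deriv (deriv ψ) t).re) + ((deriv ψ t).im * (deriv ψ t).im
          + (ψ t).im * (deriv (deriv ψ) t).im))) t :=
        ((hfre.mul hgre).add (hfim.mul hgim)).const_mul 2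
      convert h3 using 1
      ring
    have hpsi'' : ∀ t, deriv (deriv ψ) t
        = (m : ℂ) ^ 2 * ψ t + ((A t : ℂ) / ((Ω t : ℂ) - μ)) * ψ t := by
      intro t
      have h := heq t
      linear_combination -h
    have hΩmem : ∀ t, Ω t ∈ Icc (⨅ t : ℝ, Ω t) (⨆ t : ℝ, Ω t) :=
      fun t => ⟨ciInf_le hΩbdd' t, le_ciSup hΩbdd t⟩
    have hcre : ∀ t, -(δ⁻¹ * K) ≤ ((A t : ℂ) / ((Ω t : ℂ) - μ)).re := by
      intro t
      have hd : δ ≤ ‖(Ω t : ℂ) - μ‖ := hdist (Ω t) (hΩmem t)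
      have habs : ‖(A t : ℂ) / ((Ω t : ℂ) - μ)‖ ≤ δ⁻¹ * K := by
        rw [norm_div, Complex.norm_real, Real.norm_eq_abs, ← div_eq_inv_mul]
        exact div_le_div₀ hK0 (hKle t) hδ hd
      have := le_trans (Complex.abs_re_le_norm _) habs
      linarith [(abs_le.mp this).1]
    have hkey : ∀ t, (ψ t).re * (deriv (deriv ψ) t).re + (ψ t).im * (deriv (deriv ψ) t).im
        = (m ^ 2 + ((A t : ℂ) / ((Ω t : ℂ) - μ)).re) * u t := by
      intro t
      rw [hpsi'' t]
      have hm2 : ((m : ℂ) ^ 2) = ((m ^ 2 : ℝ) : ℂ) := by push_cast; ring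
      rw [hm2]
      simp only [hu, Complex.add_re, Complex.add_im, Complex.mul_re, Complex.mul_im,
        Complex.ofReal_re, Complex.ofReal_im, Complex.normSq_apply]
      ring
    have hdd : ∀ t, 0 ≤ deriv (deriv u) t := by
      intro t
      rw [hderivu, (hvd t).deriv, hkey t]
      have hu0 : 0 ≤ u t := Complex.normSq_nonneg _
      have h2 := hcre t
      have h3 : 0 ≤ (m ^ 2 + ((A t : ℂ) / ((Ω t : ℂ) - μ)).re) * u t :=
        mul_nonneg (by linarith) hu0
      nlinarith [sq_nonneg (deriv ψ t).re, sq_nonneg (deriv ψ t).im]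
    have hucont : Continuous u := Complex.continuous_normSq.comp hψ.continuous
    have hconvex : ConvexOn ℝ univ u := by
      apply convexOn_of_deriv2_nonneg convex_univ hucont.continuousOn
      · exact fun x _ => (hud x).differentiableAt.differentiableWithinAt
      · rw [hderivu]
        exact fun x _ => (hvd x).differentiableAt.differentiableWithinAt
      · intro x _
        have : deriv^[2] u x = deriv (deriv u) x := by
          simp [Function.iterate_succ, Function.iterate_zero]
        rw [this]
        exact hdd x
    have hui : Integrable u := by
      have h := hL2.integrable_norm_rpow two_ne_zero ENNReal.ofNat_ne_top
      refine h.congr ?_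
      filter_upwards with x
      rw [ENNReal.toReal_ofNat]
      rw [show ‖ψ x‖ ^ (2:ℝ) = ‖ψ x‖ ^ (2:ℕ) by
        rw [← Real.rpow_natCast]; norm_num]
      simp [hu, Complex.sq_norm]
    have hzero := convex_integrable_nonneg_eq_zero u hucont
      (fun x => Complex.normSq_nonneg _) hconvex hui
    exact hψ0 (funext fun t => Complex.normSq_eq_zero.mp (hzero t))
  refine ⟨part1, ?_⟩
  set S := ⨆ t, |Ω t| with hS
  have hSle : ∀ t, |Ω t| ≤ S := fun t => le_ciSup hΩabdd t
  have hS0 : 0 ≤ S := le_trans (abs_nonneg _) (hSle 0)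
  by_contra hcon
  push_neg at hcon
  have hm2 : 0 < m ^ 2 := by positivity
  have hinvK : 0 ≤ (m ^ 2)⁻¹ * K := by positivity
  set δ := ‖μ‖ - S with hδdef
  have hδpos : 0 < δ := by
    simp only [hδdef]
    linarith
  have hdist : ∀ x ∈ Icc (⨅ t : ℝ, Ω t) (⨆ t : ℝ, Ω t), δ ≤ ‖(x : ℂ) - μ‖ := by
    intro x hx
    have hxS : |x| ≤ S := by
      refine abs_le.mpr ⟨?_, ?_⟩
      · exact le_trans (le_ciInf fun t => by linarith [hSle t, neg_abs_le (Ω t)]) hx.1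
      · exact le_trans hx.2 (ciSup_le fun t => le_trans (le_abs_self _) (hSle t))
    calc δ = ‖μ‖ - S := rfl
      _ ≤ ‖μ‖ - ‖(x : ℂ)‖ := by rw [Complex.norm_real, Real.norm_eq_abs]; linarith
      _ ≤ ‖μ - (x : ℂ)‖ := by
          exact norm_sub_norm_le _ _
      _ = ‖(x : ℂ) - μ‖ := by
          rw [norm_sub_rev]
  have h1 := part1 δ hδpos hdist
  have h2 : δ * m ^ 2 ≤ K := by
    have := mul_le_mul_of_nonneg_left h1 hδpos.le
    rwa [← mul_assoc, mul_inv_cancel₀ hδpos.ne', one_mul] at this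
  have h3 : δ ≤ (m ^ 2)⁻¹ * K := by
    rw [← div_eq_inv_mul, le_div_iff₀ hm2]
    linarith [h2]
  simp only [hδdef] at h3
  linarith
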